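/- arXiv:1412.2455 — 4 statements merged into one kernel-verified Lean document; each statement's English description precedes it below -/
import Mathlib

section
/- Let p₀, g₀ > 0, K₀ > 0, K₁ > 0, g₁ > 0, σ₀² > 0, σ₁² > 0 be reals and N₀ ≥ 1, N₁ ≥ 1 integers. Set v₀ = p₀g₀/(1+K₀) + σ₀² and assume σ₁² < v₀. Let p* = (K₁+1)(v₀ − σ₁²)/g₁ and define L(N₁) = √(p₀g₀K₀/(1+K₀)) · √((1+K₁)/(p*·g₁·K₁)) · √(N₀/N₁). Then L(N₁) ≤ 1 if and only if N₁ ≥ p₀g₀K₀N₀ / (K₁·(p₀g₀ + (1+K₀)(σ₀² − σ₁²))). -/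
/-- Feasibility condition `L(N₁) ≤ 1` for the optimal beamformer is equivalent to the
critical antenna-number bound `N₁ ≥ N₁*`. -/
theorem stmt_3 (p₀ g₀ K₀ K₁ g₁ σ₀sq σ₁sq : ℝ)
    (hp₀ : 0 < p₀) (hg₀ : 0 < g₀) (hK₀ : 0 < K₀) (hK₁ : 0 < K₁) (hg₁ : 0 < g₁)
    (hσ₀ : 0 < σ₀sq) (hσ₁ : 0 < σ₁sq)
    (N₀ N₁ : ℕ) (hN₀ : 1 ≤ N₀) (hN₁ : 1 ≤ N₁)
    (v₀ : ℝ) (hv₀ : v₀ = p₀ * g₀ / (1 + K₀) + σ₀sq) (hσv : σ₁sq < v₀)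
    (pstar : ℝ) (hpstar : pstar = (K₁ + 1) * (v₀ - σ₁sq) / g₁)
    (L : ℕ → ℝ)
    (hL : ∀ n : ℕ, L n = Real.sqrt (p₀ * g₀ * K₀ / (1 + K₀)) *
      Real.sqrt ((1 + K₁) / (pstar * g₁ * K₁)) * Real.sqrt ((N₀ : ℝ) / (n : ℝ))) :
    L N₁ ≤ 1 ↔
      (N₁ : ℝ) ≥ p₀ * g₀ * K₀ * N₀ / (K₁ * (p₀ * g₀ + (1 + K₀) * (σ₀sq - σ₁sq))) := by
  have hN₁pos : (0:ℝ) < (N₁ : ℝ) := by exact_mod_cast hN₁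
  have hN₀pos : (0:ℝ) < (N₀ : ℝ) := by exact_mod_cast hN₀
  have h1K₀ : (0:ℝ) < 1 + K₀ := by linarith
  have hvpos : 0 < v₀ - σ₁sq := by linarith
  have hpg : pstar * g₁ = (K₁ + 1) * (v₀ - σ₁sq) := by
    rw [hpstar]; field_simp
  have hA : (0:ℝ) ≤ p₀ * g₀ * K₀ / (1 + K₀) := by positivity
  set E : ℝ := p₀ * g₀ * K₀ / (1 + K₀) * ((1 + K₁) / (pstar * g₁ * K₁)) *
      ((N₀ : ℝ) / (N₁ : ℝ)) with hE
  have hB : (0:ℝ) ≤ (1 + K₁) / (pstar * g₁ * K₁) := by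
    rw [hpg]; positivity
  have hLE : L N₁ = Real.sqrt E := by
    rw [hL, hE, Real.sqrt_mul (mul_nonneg hA hB), Real.sqrt_mul hA]
  have hDv : K₁ * (p₀ * g₀ + (1 + K₀) * (σ₀sq - σ₁sq)) = K₁ * (1 + K₀) * (v₀ - σ₁sq) := by
    rw [hv₀]; field_simp; ring
  have hD : (0:ℝ) < K₁ * (p₀ * g₀ + (1 + K₀) * (σ₀sq - σ₁sq)) := by
    rw [hDv]; positivity
  have hE2 : E = p₀ * g₀ * K₀ * N₀ / (K₁ * (p₀ * g₀ + (1 + K₀) * (σ₀sq - σ₁sq))) / N₁ := by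
    rw [hE, hpg, hDv]
    field_simp
    ring
  have key : E ≤ 1 ↔
      (N₁ : ℝ) ≥ p₀ * g₀ * K₀ * N₀ / (K₁ * (p₀ * g₀ + (1 + K₀) * (σ₀sq - σ₁sq))) := by
    rw [hE2, ge_iff_le, div_le_one hN₁pos]
  have hsqrt : Real.sqrt E ≤ 1 ↔ E ≤ 1 := by
    have := Real.sqrt_le_sqrt_iff (x := E) (y := 1) zero_le_one
    rwa [Real.sqrt_one] at this
  rw [hLE, hsqrt, key]
end

section
/- Let p₀, g₀, g₁ > 0, K₀ > 0, K₁ > 0, σ₀², σ₁² > 0 be reals, N_B, N₀, N₁ ≥ 1 integers, v₀ = p₀g₀/(1+K₀) + σ₀². Let r₀, r₁ ∈ ℂ^{N_B} and t₁ ∈ ℂ^{N₁} be vectors all of whose entries have modulus 1, m₀ = √(p₀g₀K₀N₀/(1+K₀))·r₀, and for p ≥ 0, b ∈ ℂ^{N₁} set m₁(p,b) = √(p·g₁·K₁/(1+K₁))·(Σ_k (t₁)_k b_k)·r₁, v₁(p) = p·g₁/(1+K₁) + σ₁², and F(p,b) = N_B·(v₁(p)/v₀ − 1 − ln(v₁(p)/v₀))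 + ‖m₀ − m₁(p,b)‖²/v₀. Then for every p ≥ 0 and every b ∈ ℂ^{N₁} with ‖b‖ = 1, F(p,b) ≥ (p₀g₀K₀N₀/((1+K₀)·v₀))·(N_B − |⟨r₁,r₀⟩|²/N_B). -/
open scoped BigOperators

set_option maxHeartbeats 400000 in
/-- Worst-case lower bound: for every admissible power `p ≥ 0` and unit beamformer `b`,
the KL divergence `F(p,b)` is at least the minimum value of Eq. (KL_minimum_xt). -/
theorem stmt_9 (p₀ g₀ g₁ K₀ K₁ σ₀sq σ₁sq : ℝ)
    (hp₀ : 0 < p₀) (hg₀ : 0 < g₀) (hg₁ : 0 < g₁) (hK₀ : 0 < K₀) (hK₁ : 0 < K₁)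
    (hσ₀ : 0 < σ₀sq) (hσ₁ : 0 < σ₁sq)
    (NB N₀ N₁ : ℕ) (hNB : 1 ≤ NB) (hN₀ : 1 ≤ N₀) (hN₁ : 1 ≤ N₁)
    (v₀ : ℝ) (hv₀ : v₀ = p₀ * g₀ / (1 + K₀) + σ₀sq)
    (r₀ r₁ : Fin NB → ℂ) (t₁ : Fin N₁ → ℂ)
    (hr₀ : ∀ j, ‖r₀ j‖ = 1) (hr₁ : ∀ j, ‖r₁ j‖ = 1)
    (ht₁ : ∀ k, ‖t₁ k‖ = 1)
    (m₀ : Fin NB → ℂ)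
    (hm₀ : ∀ j, m₀ j = (Real.sqrt (p₀ * g₀ * K₀ * N₀ / (1 + K₀)) : ℂ) * r₀ j)
    (m₁ : ℝ → (Fin N₁ → ℂ) → Fin NB → ℂ)
    (hm₁ : ∀ p b j, m₁ p b j =
      (Real.sqrt (p * g₁ * K₁ / (1 + K₁)) : ℂ) * (∑ k, t₁ k * b k) * r₁ j)
    (v₁ : ℝ → ℝ) (hv₁ : ∀ p, v₁ p = p * g₁ / (1 + K₁) + σ₁sq)
    (F : ℝ → (Fin N₁ → ℂ) → ℝ)
    (hF : ∀ p b, F p b = (NB : ℝ) * (v₁ p / v₀ - 1 - Real.log (v₁ p / v₀)) +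
      (∑ j, ‖m₀ j - m₁ p b j‖ ^ 2) / v₀) :
    ∀ p : ℝ, 0 ≤ p → ∀ b : Fin N₁ → ℂ, (∑ k, ‖b k‖ ^ 2) = 1 →
      F p b ≥ p₀ * g₀ * K₀ * N₀ / ((1 + K₀) * v₀) *
        ((NB : ℝ) - ‖∑ j, (starRingEnd ℂ) (r₁ j) * r₀ j‖ ^ 2 / NB) := by
  intro p hp b hb
  have hK₀' : (0:ℝ) < 1 + K₀ := by linarith
  have hK₁' : (0:ℝ) < 1 + K₁ := by linarith
  have hv₀pos : 0 < v₀ := by rw [hv₀]; positivity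
  have hv₁pos : 0 < v₁ p := by
    rw [hv₁ p]
    have h1 : 0 ≤ p * g₁ / (1 + K₁) := by positivity
    linarith
  have hlog : 0 ≤ v₁ p / v₀ - 1 - Real.log (v₁ p / v₀) := by
    have h := Real.log_le_sub_one_of_pos (div_pos hv₁pos hv₀pos)
    linarith
  set A : ℝ := Real.sqrt (p₀ * g₀ * K₀ * N₀ / (1 + K₀)) with hA
  have hA2 : A ^ 2 = p₀ * g₀ * K₀ * N₀ / (1 + K₀) := by
    rw [hA]; exact Real.sq_sqrt (by positivity)
  set c : ℂ := (Real.sqrt (p * g₁ * K₁ / (1 + K₁)) : ℂ) * (∑ k, t₁ k * b k) with hc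
  set S : ℂ := ∑ j, (starRingEnd ℂ) (r₁ j) * r₀ j with hS
  -- per-term expansion
  have hterm : ∀ j, ‖m₀ j - m₁ p b j‖ ^ 2
      = A ^ 2 + Complex.normSq c
        - 2 * (((A:ℂ) * (starRingEnd ℂ) c) * ((starRingEnd ℂ) (r₁ j) * r₀ j)).re := by
    intro j
    have hd : m₀ j - m₁ p b j = (A:ℂ) * r₀ j - c * r₁ j := by
      rw [hm₀ j, hm₁ p b j, hc]
    rw [hd, Complex.sq_norm, Complex.normSq_sub]
    have h1 : Complex.normSq ((A:ℂ) * r₀ j) = A ^ 2 := by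
      rw [Complex.normSq_mul, Complex.normSq_ofReal, ← Complex.sq_norm, hr₀ j]
      ring
    have h2 : Complex.normSq (c * r₁ j) = Complex.normSq c := by
      rw [Complex.normSq_mul, ← Complex.sq_norm (r₁ j), hr₁ j]; ring
    have h3 : (A:ℂ) * r₀ j * (starRingEnd ℂ) (c * r₁ j)
        = ((A:ℂ) * (starRingEnd ℂ) c) * ((starRingEnd ℂ) (r₁ j) * r₀ j) := by
      rw [map_mul]; ring
    rw [h1, h2, h3]
  have hsum : (∑ j, ‖m₀ j - m₁ p b j‖ ^ 2)
      = (NB : ℝ) * (A ^ 2 + Complex.normSq c)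
        - 2 * (((A:ℂ) * (starRingEnd ℂ) c) * S).re := by
    calc (∑ j, ‖m₀ j - m₁ p b j‖ ^ 2)
        = ∑ j : Fin NB, (A ^ 2 + Complex.normSq c
            - 2 * (((A:ℂ) * (starRingEnd ℂ) c) * ((starRingEnd ℂ) (r₁ j) * r₀ j)).re) := by
          exact Finset.sum_congr rfl fun j _ => hterm j
      _ = (NB : ℝ) * (A ^ 2 + Complex.normSq c)
            - 2 * (∑ j : Fin NB, (((A:ℂ) * (starRingEnd ℂ) c) * ((starRingEnd ℂ) (r₁ j) * r₀ j)).re) := by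
          rw [Finset.sum_sub_distrib, Finset.sum_const, Finset.card_univ,
            Fintype.card_fin, nsmul_eq_mul, ← Finset.mul_sum]
      _ = _ := by
          rw [hS]
          congr 1
          rw [← Complex.re_sum, ← Finset.mul_sum]
  -- key real inequality
  have hAnn : 0 ≤ A := Real.sqrt_nonneg _
  have hn : (1:ℝ) ≤ (NB:ℝ) := by exact_mod_cast hNB
  have hnpos : (0:ℝ) < (NB:ℝ) := by linarith
  have hkey : A ^ 2 * ((NB : ℝ) - ‖S‖ ^ 2 / NB)
      ≤ (NB : ℝ) * (A ^ 2 + Complex.normSq c)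
        - 2 * (((A:ℂ) * (starRingEnd ℂ) c) * S).re := by
    have hre : (((A:ℂ) * (starRingEnd ℂ) c) * S).re
        = A * (c.re * S.re + c.im * S.im) := by
      simp [Complex.mul_re, Complex.mul_im]
      ring
    have habs : ‖S‖ ^ 2 = S.re ^ 2 + S.im ^ 2 := by
      rw [Complex.sq_norm, Complex.normSq_apply]; ring
    have hnsq : Complex.normSq c = c.re ^ 2 + c.im ^ 2 := by
      rw [Complex.normSq_apply]; ring
    rw [hre, habs, hnsq]
    have hNBne : ((NB:ℝ)) ≠ 0 := ne_of_gt hnpos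
    have key : (NB:ℝ) * (c.re ^ 2 + c.im ^ 2)
          - 2 * (A * (c.re * S.re + c.im * S.im))
          + A ^ 2 * (S.re ^ 2 + S.im ^ 2) / (NB:ℝ)
        = (((NB:ℝ) * c.re - A * S.re) ^ 2 + ((NB:ℝ) * c.im - A * S.im) ^ 2) / (NB:ℝ) := by
      field_simp
      ring
    have hpos : 0 ≤ (((NB:ℝ) * c.re - A * S.re) ^ 2 + ((NB:ℝ) * c.im - A * S.im) ^ 2) / (NB:ℝ) :=
      div_nonneg (by positivity) hnpos.le
    have e : A ^ 2 * ((NB:ℝ) - (S.re ^ 2 + S.im ^ 2) / (NB:ℝ))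
        = (NB:ℝ) * (A ^ 2 + (c.re ^ 2 + c.im ^ 2)) - 2 * (A * (c.re * S.re + c.im * S.im))
          - ((((NB:ℝ) * c.re - A * S.re) ^ 2 + ((NB:ℝ) * c.im - A * S.im) ^ 2) / (NB:ℝ)) := by
      rw [← key]; ring
    rw [e]
    linarith [hpos]
  -- put it together
  have hRHS : p₀ * g₀ * K₀ * N₀ / ((1 + K₀) * v₀) *
        ((NB : ℝ) - ‖S‖ ^ 2 / NB)
      = (A ^ 2 * ((NB : ℝ) - ‖S‖ ^ 2 / NB)) / v₀ := by
    rw [hA2, div_mul_eq_mul_div, div_mul_eq_mul_div, div_div]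
  rw [hF, hRHS, hsum]
  have h1 : 0 ≤ (NB : ℝ) * (v₁ p / v₀ - 1 - Real.log (v₁ p / v₀)) := by positivity
  have h2 : (A ^ 2 * ((NB : ℝ) - ‖S‖ ^ 2 / NB)) / v₀
      ≤ ((NB : ℝ) * (A ^ 2 + Complex.normSq c)
        - 2 * (((A:ℂ) * (starRingEnd ℂ) c) * S).re) / v₀ := by
    exact div_le_div_of_nonneg_right hkey hv₀pos.le
  linarith
end

section
/- Let T ≥ 1 and N ≥ 1 be integers, and for each t ∈ {1,…,T} let v(t) > 0 and m₀(t), m₁(t) ∈ ℂ^N, with m₁(t) ≠ m₀(t) for at least one t; set D = Σ_{t=1}^T ‖m₁(t) − m₀(t)‖²/v(t) > 0. For m ∈ ℂ^N and v > 0 let f_{m,v}(y) = (π v)^{−N}·exp(−‖y − m‖²/v) and μ_{m,v} the probability measure on ℂ^N ≅ ℝ^{2N} with this density, and let μ_k = ⊗_{t=1}^T μ_{m_k(t),v(t)} (k = 0,1) be the product measures on (ℂ^N)^T. Let Q(x) = ∫_x^∞ (2π)^{−1/2}·e^{−t²/2} dt. Then for every λ > 0: (i) μ₀{ (y(1),…,y(T))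 : Π_{t=1}^T f_{m₁(t),v(t)}(y(t)) / Π_{t=1}^T f_{m₀(t),v(t)}(y(t)) > λ } = Q((ln λ + D)/√(2D)); (ii) μ₁ of the same event equals Q((ln λ − D)/√(2D)). -/
open scoped BigOperators
open MeasureTheory

open Real ProbabilityTheory
open scoped NNReal ENNReal

lemma conv_pdf (m1 m2 : ℝ) (v1 v2 : ℝ≥0) (h1 : v1 ≠ 0) (h2 : v2 ≠ 0) (z : ℝ) :
    ∫ x : ℝ, gaussianPDFReal m1 v1 x * gaussianPDFReal m2 v2 (z - x)
      = gaussianPDFReal (m1 + m2) (v1 + v2) z := by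
  have hσ0 : 0 < (v1 : ℝ) := by exact_mod_cast pos_iff_ne_zero.2 h1
  have hτ0 : 0 < (v2 : ℝ) := by exact_mod_cast pos_iff_ne_zero.2 h2
  set σ : ℝ := (v1 : ℝ)
  set τ : ℝ := (v2 : ℝ)
  have hπ : (0:ℝ) < π := pi_pos
  set b : ℝ := (σ + τ) / (2 * σ * τ) with hb
  set c : ℝ := m1 + σ * (z - m1 - m2) / (σ + τ) with hc
  have hb0 : 0 < b := by positivity
  set K : ℝ := (√(2*π*σ))⁻¹ * (√(2*π*τ))⁻¹ * rexp (-(z - m1 - m2)^2 / (2*(σ+τ))) with hK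
  have hpt : ∀ x : ℝ, gaussianPDFReal m1 v1 x * gaussianPDFReal m2 v2 (z - x)
      = K * rexp (-(b * (x - c)^2)) := by
    intro x
    have hexp : -(x - m1)^2/(2*σ) + -(z - x - m2)^2/(2*τ)
        = -(z - m1 - m2)^2/(2*(σ+τ)) + -(b * (x - c)^2) := by
      rw [hb, hc]; field_simp; ring
    simp only [gaussianPDFReal, hK]
    rw [mul_mul_mul_comm, ← Real.exp_add, hexp, Real.exp_add, ← mul_assoc, mul_assoc]
  have halg : (√(2*π*σ))⁻¹ * (√(2*π*τ))⁻¹ * √(π/b) = (√(2*π*(σ+τ)))⁻¹ := by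
    rw [← Real.sqrt_inv, ← Real.sqrt_inv, ← Real.sqrt_inv,
      ← Real.sqrt_mul (by positivity), ← Real.sqrt_mul (by positivity)]
    congr 1
    rw [hb]
    field_simp
  calc ∫ x : ℝ, gaussianPDFReal m1 v1 x * gaussianPDFReal m2 v2 (z - x)
      = ∫ x : ℝ, K * rexp (-(b * (x - c)^2)) := by simp_rw [hpt]
    _ = K * ∫ x : ℝ, rexp (-(b * (x - c)^2)) := integral_const_mul _ _
    _ = K * ∫ x : ℝ, rexp (-(b * x^2)) := by
        rw [← integral_sub_right_eq_self (fun x => rexp (-(b * x^2))) c]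
    _ = K * √(π/b) := by simp_rw [← neg_mul]; rw [integral_gaussian]
    _ = gaussianPDFReal (m1 + m2) (v1 + v2) z := by
        simp only [gaussianPDFReal, hK, NNReal.coe_add]
        rw [← halg]
        simp only [σ, τ]
        ring

lemma pdfReal_le (m : ℝ) (v : ℝ≥0) (x : ℝ) :
    gaussianPDFReal m v x ≤ (√(2*π*v))⁻¹ := by
  rw [gaussianPDFReal]
  have h1 : rexp (-(x - m)^2/(2*v)) ≤ 1 := by
    rw [Real.exp_le_one_iff]
    have h0 : -(x - m)^2/(2*(v:ℝ)) = -((x-m)^2/(2*v)) := by ring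
    have : (0:ℝ) ≤ (x-m)^2/(2*v) := by positivity
    rw [h0]
    linarith
  have h2 : (0:ℝ) ≤ (√(2*π*v))⁻¹ := by positivity
  calc (√(2*π*v))⁻¹ * rexp (-(x - m)^2/(2*v)) ≤ (√(2*π*v))⁻¹ * 1 :=
        mul_le_mul_of_nonneg_left h1 h2
    _ = _ := mul_one _

lemma conv_pdf_lintegral (m1 m2 : ℝ) (v1 v2 : ℝ≥0) (h1 : v1 ≠ 0) (h2 : v2 ≠ 0) (z : ℝ) :
    ∫⁻ x : ℝ, gaussianPDF m1 v1 x * gaussianPDF m2 v2 (z - x)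
      = gaussianPDF (m1 + m2) (v1 + v2) z := by
  have hint : Integrable (fun x => gaussianPDFReal m1 v1 x * gaussianPDFReal m2 v2 (z - x)) := by
    have h : Integrable (fun x => gaussianPDFReal m2 v2 (z - x) * gaussianPDFReal m1 v1 x) := by
      refine (integrable_gaussianPDFReal m1 v1).bdd_mul (c := (√(2*π*v2))⁻¹) ?_ (ae_of_all _ fun x => ?_)
      · exact ((measurable_gaussianPDFReal m2 v2).comp
          (measurable_const.sub measurable_id)).aestronglyMeasurable
      · rw [Real.norm_eq_abs, abs_of_nonneg (gaussianPDFReal_nonneg _ _ _)]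
        exact pdfReal_le _ _ _
    simpa [mul_comm] using h
  have hmul : ∀ x, gaussianPDFReal m1 v1 x * gaussianPDFReal m2 v2 (z - x) =
      (fun y => gaussianPDFReal m2 v2 (z - y)) x * gaussianPDFReal m1 v1 x := fun x => mul_comm _ _
  simp only [gaussianPDF]
  rw [show (fun x => ENNReal.ofReal (gaussianPDFReal m1 v1 x) * ENNReal.ofReal (gaussianPDFReal m2 v2 (z - x)))
      = fun x => ENNReal.ofReal (gaussianPDFReal m1 v1 x * gaussianPDFReal m2 v2 (z - x)) by
    funext x; rw [ENNReal.ofReal_mul (gaussianPDFReal_nonneg _ _ _)]]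
  rw [← ofReal_integral_eq_lintegral_ofReal hint
    (ae_of_all _ fun x => mul_nonneg (gaussianPDFReal_nonneg _ _ _) (gaussianPDFReal_nonneg _ _ _)),
    conv_pdf m1 m2 v1 v2 h1 h2 z]

lemma meas_pdf2 (m2 : ℝ) (v2 : ℝ≥0) :
    Measurable (fun p : ℝ × ℝ => gaussianPDF (m2 + p.1) v2 p.2) := by
  simp only [gaussianPDF, gaussianPDFReal]
  fun_prop

lemma gauss_map_add (m1 m2 : ℝ) (v1 v2 : ℝ≥0) :
    ((gaussianReal m1 v1).prod (gaussianReal m2 v2)).map (fun p : ℝ × ℝ => p.1 + p.2)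
      = gaussianReal (m1 + m2) (v1 + v2) := by
  by_cases h1 : v1 = 0
  · subst h1
    rw [gaussianReal_zero_var, Measure.dirac_prod, Measure.map_map (by fun_prop) (by fun_prop)]
    have : ((fun p : ℝ × ℝ => p.1 + p.2) ∘ Prod.mk m1) = fun y => m1 + y := rfl
    rw [this, gaussianReal_map_const_add, add_comm m2 m1, zero_add]
  by_cases h2 : v2 = 0
  · subst h2
    rw [gaussianReal_zero_var, Measure.prod_dirac, Measure.map_map (by fun_prop) (by fun_prop)]
    have : ((fun p : ℝ × ℝ => p.1 + p.2) ∘ fun x => (x, m2)) = fun y => y + m2 := rfl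
    rw [this, gaussianReal_map_add_const, add_zero]
  ext s hs
  rw [Measure.map_apply (by fun_prop) hs,
    Measure.prod_apply (measurable_add hs)]
  have hinner : ∀ x : ℝ, gaussianReal m2 v2 (Prod.mk x ⁻¹' ((fun p : ℝ × ℝ => p.1 + p.2) ⁻¹' s))
      = ∫⁻ z in s, gaussianPDF (m2 + x) v2 z := by
    intro x
    have hpre : (Prod.mk x ⁻¹' ((fun p : ℝ × ℝ => p.1 + p.2) ⁻¹' s)) = (fun y => x + y) ⁻¹' s := rfl
    rw [hpre, ← Measure.map_apply (by fun_prop) hs, gaussianReal_map_const_add,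
      gaussianReal_apply _ h2]
  simp_rw [hinner]
  have hFmeas : Measurable fun x : ℝ => ∫⁻ z in s, gaussianPDF (m2 + x) v2 z :=
    Measurable.lintegral_prod_right (meas_pdf2 m2 v2)
  rw [gaussianReal_of_var_ne_zero _ h1,
    lintegral_withDensity_eq_lintegral_mul _ (measurable_gaussianPDF m1 v1) hFmeas]
  have hstep : ∀ x : ℝ, gaussianPDF m1 v1 x * ∫⁻ z in s, gaussianPDF (m2 + x) v2 z
      = ∫⁻ z in s, gaussianPDF m1 v1 x * gaussianPDF (m2 + x) v2 z := by
    intro x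
    have hm : Measurable fun z : ℝ => gaussianPDF (m2 + x) v2 z := by
      simp only [gaussianPDF, gaussianPDFReal]; fun_prop
    rw [← lintegral_const_mul _ hm]
  simp only [Pi.mul_apply]
  simp_rw [hstep]
  rw [lintegral_lintegral_swap]
  · have : ∀ z : ℝ, ∫⁻ x : ℝ, gaussianPDF m1 v1 x * gaussianPDF (m2 + x) v2 z
        = gaussianPDF (m1 + m2) (v1 + v2) z := by
      intro z
      rw [← conv_pdf_lintegral m1 m2 v1 v2 h1 h2 z]
      congr 1 with x
      congr 1
      simp only [gaussianPDF]
      rw [gaussianPDFReal_sub]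
    simp_rw [this]
    rw [← gaussianReal_apply _ (by simp [h1]) s]
  · exact ((measurable_gaussianPDF m1 v1).comp measurable_fst |>.mul
      ((meas_pdf2 m2 v2))).aemeasurable

-- H1

lemma wd_map_equiv {α β : Type*} [MeasurableSpace α] [MeasurableSpace β] (e : α ≃ᵐ β)
    (μ : Measure α) (g : β → ℝ≥0∞) (hg : Measurable g) :
    (μ.map e).withDensity g = (μ.withDensity (fun a => g (e a))).map e := by
  ext s hs
  rw [withDensity_apply _ hs, MeasurableEquiv.map_apply, withDensity_apply _ (e.measurable hs),
    setLIntegral_map hs hg e.measurable]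

-- H2

lemma prod_wd {α β : Type*} [MeasurableSpace α] [MeasurableSpace β]
    (μ : Measure α) (ν : Measure β) [SigmaFinite μ] [SigmaFinite ν]
    (f : α → ℝ≥0∞) (g : β → ℝ≥0∞) (hf : Measurable f) (hg : Measurable g)
    [SigmaFinite (μ.withDensity f)] [SigmaFinite (ν.withDensity g)] :
    (μ.withDensity f).prod (ν.withDensity g)
      = (μ.prod ν).withDensity (fun p => f p.1 * g p.2) := by
  refine Measure.prod_eq fun s t hs ht => ?_
  rw [withDensity_apply _ (hs.prod ht), withDensity_apply _ hs, withDensity_apply _ ht,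
    ← Measure.prod_restrict, lintegral_prod_mul hf.aemeasurable hg.aemeasurable]

-- L3

lemma gauss_map_add' {α β : Type*} [MeasurableSpace α] [MeasurableSpace β]
    (μ : Measure α) (ν : Measure β) [SigmaFinite μ] [SigmaFinite ν]
    (f : α → ℝ) (g : β → ℝ) (hf : Measurable f) (hg : Measurable g)
    (m1 m2 : ℝ) (v1 v2 : ℝ≥0)
    (h1 : μ.map f = gaussianReal m1 v1) (h2 : ν.map g = gaussianReal m2 v2) :
    (μ.prod ν).map (fun p => f p.1 + g p.2) = gaussianReal (m1 + m2) (v1 + v2) := by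
  have : (fun p : α × β => f p.1 + g p.2) = (fun q : ℝ × ℝ => q.1 + q.2) ∘ (Prod.map f g) := rfl
  rw [this, ← Measure.map_map (by fun_prop) (hf.prodMap hg),
    ← Measure.map_prod_map _ _ hf hg, h1, h2, gauss_map_add]

-- L4

lemma gauss_map_sum {α : Type*} [MeasurableSpace α] :
    ∀ (n : ℕ) (ν : Fin n → Measure α), (∀ i, IsProbabilityMeasure (ν i)) →
    ∀ (g : Fin n → α → ℝ), (∀ i, Measurable (g i)) →
    ∀ (m : Fin n → ℝ) (w : Fin n → ℝ≥0), (∀ i, (ν i).map (g i) = gaussianReal (m i) (w i)) →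
    (Measure.pi ν).map (fun x => ∑ i, g i (x i)) = gaussianReal (∑ i, m i) (∑ i, w i) := by
  intro n
  induction n with
  | zero =>
    intro ν hν g hg m w h
    have : (fun x : Fin 0 → α => ∑ i, g i (x i)) = fun _ => (0:ℝ) := by
      funext x; simp
    rw [this]
    haveI : ∀ i, IsProbabilityMeasure (ν i) := hν
    rw [Measure.map_const]
    simp only [Fin.sum_univ_zero, measure_univ, one_smul]
    exact (gaussianReal_zero_var 0).symm
  | succ n ih =>
    intro ν hν g hg m w h
    haveI : ∀ i, IsProbabilityMeasure (ν i) := hν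
    have hmp := measurePreserving_piFinSuccAbove ν 0
    have hsum : (fun x : Fin (n+1) → α => ∑ i, g i (x i))
        = (fun p : α × (Fin n → α) => g 0 p.1 + ∑ j : Fin n, g (Fin.succ j) (p.2 j))
          ∘ (MeasurableEquiv.piFinSuccAbove (fun _ => α) 0) := by
      funext x
      simp only [Function.comp_apply, MeasurableEquiv.piFinSuccAbove_apply]
      rw [Fin.sum_univ_succ]
      rfl
    have hgm : Measurable (fun p : α × (Fin n → α) => g 0 p.1 + ∑ j : Fin n, g (Fin.succ j) (p.2 j)) := by
      refine ((hg 0).comp measurable_fst).add ?_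
      exact Finset.measurable_sum Finset.univ fun j _ =>
        (hg j.succ).comp ((measurable_pi_apply j).comp measurable_snd)
    simp only [Fin.succAbove_zero] at hmp
    rw [hsum, ← Measure.map_map hgm (MeasurableEquiv.piFinSuccAbove (fun _ => α) 0).measurable,
      hmp.map_eq]
    have hrest := ih (fun j => ν (Fin.succ j)) (fun j => hν _) (fun j => g (Fin.succ j))
      (fun j => hg _) (fun j => m (Fin.succ j)) (fun j => w (Fin.succ j)) (fun j => h _)
    have := gauss_map_add' (ν 0) (Measure.pi fun j => ν (Fin.succ j))
      (g 0) (fun y => ∑ j : Fin n, g (Fin.succ j) (y j)) (hg 0)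
      (Finset.measurable_sum Finset.univ fun j _ => (hg j.succ).comp (measurable_pi_apply j))
      (m 0) (∑ j, m (Fin.succ j)) (w 0) (∑ j, w (Fin.succ j)) (h 0) hrest
    rw [this, Fin.sum_univ_succ, Fin.sum_univ_succ]

-- L5 : tail formula

lemma gauss_tail (m : ℝ) (w : ℝ≥0) (hw : w ≠ 0) (x : ℝ) :
    gaussianReal m w (Set.Ioi x) = ENNReal.ofReal
      (∫ s in Set.Ioi ((x - m) / Real.sqrt w), Real.exp (-s^2/2) / Real.sqrt (2*π)) := by
  have hw0 : (0:ℝ) < w := by exact_mod_cast pos_iff_ne_zero.2 hw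
  have hsq : (0:ℝ) < Real.sqrt w := Real.sqrt_pos.2 hw0
  have hsqw : (⟨Real.sqrt w ^ 2, sq_nonneg _⟩ : ℝ≥0) * 1 = w := by
    rw [mul_one]; exact Subtype.ext (Real.sq_sqrt hw0.le)
  have hmap1 : (gaussianReal 0 1).map (fun t => Real.sqrt w * t) = gaussianReal 0 w := by
    have h := gaussianReal_map_const_mul (μ := 0) (v := 1) (Real.sqrt w)
    rw [mul_zero] at h
    convert h using 2
    exact hsqw.symm
  have hmap : (gaussianReal 0 1).map (fun t => Real.sqrt w * t + m) = gaussianReal m w := by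
    have : (fun t : ℝ => Real.sqrt w * t + m) = (fun u => u + m) ∘ (fun t => Real.sqrt w * t) := rfl
    rw [this, ← Measure.map_map (by fun_prop) (by fun_prop), hmap1, gaussianReal_map_add_const,
      zero_add]
  rw [← hmap, Measure.map_apply (by fun_prop) measurableSet_Ioi]
  have hpre : (fun t : ℝ => Real.sqrt w * t + m) ⁻¹' Set.Ioi x
      = Set.Ioi ((x - m) / Real.sqrt w) := by
    ext t
    simp only [Set.mem_preimage, Set.mem_Ioi]
    rw [div_lt_iff₀ hsq]
    constructor <;> intro h' <;> nlinarith
  rw [hpre, gaussianReal_apply_eq_integral _ one_ne_zero]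
  congr 1
  refine setIntegral_congr_fun measurableSet_Ioi fun s _ => ?_
  simp only [gaussianPDFReal, NNReal.coe_one, mul_one, sub_zero]
  rw [inv_mul_eq_div]

-- H3 : pi of withDensity

lemma pi_wd {α : Type*} [MeasurableSpace α] :
    ∀ (n : ℕ) (μ : Fin n → Measure α), (∀ i, SigmaFinite (μ i)) →
    ∀ (f : Fin n → α → ℝ≥0∞), (∀ i, Measurable (f i)) →
    (∀ i, IsProbabilityMeasure ((μ i).withDensity (f i))) →
    Measure.pi (fun i => (μ i).withDensity (f i))
      = (Measure.pi μ).withDensity (fun x => ∏ i, f i (x i)) := by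
  intro n
  induction n with
  | zero =>
    intro μ hσ f hf hP
    haveI := hσ
    rw [show (fun x : Fin 0 → α => ∏ i, f i (x i)) = fun _ => 1 by funext x; simp,
      Measure.pi_of_empty, Measure.pi_of_empty]
    rw [show (fun (_ : Fin 0 → α) => (1:ℝ≥0∞)) = (1 : (Fin 0 → α) → ℝ≥0∞) from rfl,
      withDensity_one]
  | succ n ih =>
    intro μ hσ f hf hP
    haveI := hσ
    haveI := hP
    haveI : ∀ j : Fin n, SigmaFinite (μ (Fin.succ j)) := fun j => hσ _
    set e := MeasurableEquiv.piFinSuccAbove (fun _ : Fin (n+1) => α) 0 with he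
    have hmpwd := measurePreserving_piFinSuccAbove (fun i => (μ i).withDensity (f i)) 0
    have hmpμ := measurePreserving_piFinSuccAbove μ 0
    simp only [Fin.succAbove_zero] at hmpwd hmpμ
    have htail := ih (fun j => μ (Fin.succ j)) (fun j => hσ _) (fun j => f (Fin.succ j))
      (fun j => hf _) (fun j => hP _)
    haveI : IsProbabilityMeasure ((Measure.pi fun j => μ (Fin.succ j)).withDensity
        (fun x => ∏ j, f (Fin.succ j) (x j))) := by
      rw [← htail]; infer_instance
    have hG : ∀ p : α × (Fin n → α),
        (∏ i, f i (e.symm p i)) = f 0 p.1 * ∏ j, f (Fin.succ j) (p.2 j) := by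
      intro p
      simp only [he, MeasurableEquiv.piFinSuccAbove_symm_apply]
      rw [Fin.prod_univ_succ]
      simp
    have step : Measure.pi (fun i => (μ i).withDensity (f i))
        = (((μ 0).withDensity (f 0)).prod
            ((Measure.pi fun j => μ (Fin.succ j)).withDensity
              (fun x => ∏ j, f (Fin.succ j) (x j)))).map e.symm := by
      rw [← htail, ← (hmpwd.symm e).map_eq]
    rw [step, prod_wd _ _ _ _ (hf 0)
      (Finset.measurable_prod Finset.univ fun j _ => (hf j.succ).comp (measurable_pi_apply j))]
    have hrw := wd_map_equiv e.symm ((μ 0).prod (Measure.pi fun j => μ (Fin.succ j)))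
      (fun x => ∏ i, f i (x i))
      (Finset.measurable_prod Finset.univ fun i _ => (hf i).comp (measurable_pi_apply i))
    rw [(hmpμ.symm e).map_eq] at hrw
    rw [hrw]
    have heq : (fun p : α × (Fin n → α) => f 0 p.1 * ∏ j, f (Fin.succ j) (p.2 j))
        = fun a : α × (Fin n → α) => (fun x => ∏ i, f i (x i)) (e.symm a) :=
      funext fun p => (hG p).symm
    rw [heq]

noncomputable def cgauss (a : ℂ) (w : ℝ≥0) : Measure ℂ :=
  ((gaussianReal a.re (w/2)).prod (gaussianReal a.im (w/2))).map
    Complex.measurableEquivRealProd.symm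

instance cgauss_prob (a : ℂ) (w : ℝ≥0) : IsProbabilityMeasure (cgauss a w) := by
  unfold cgauss
  exact Measure.isProbabilityMeasure_map (Measurable.aemeasurable (MeasurableEquiv.measurable _))

lemma cgauss_density (a : ℂ) (w : ℝ≥0) (hw : w ≠ 0) :
    volume.withDensity
        (fun y : ℂ => ENNReal.ofReal ((π * w)⁻¹ * rexp (-‖y - a‖^2 / w)))
      = cgauss a w := by
  have hw0 : (0:ℝ) < w := by exact_mod_cast pos_iff_ne_zero.2 hw
  have hw2 : (w/2 : ℝ≥0) ≠ 0 := by
    simp only [ne_eq, div_eq_zero_iff]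
    push_neg
    exact ⟨hw, by norm_num⟩
  set e := Complex.measurableEquivRealProd with he
  set dens : ℂ → ℝ≥0∞ :=
    fun y : ℂ => ENNReal.ofReal ((π * w)⁻¹ * rexp (-‖y - a‖^2 / w)) with hdens
  have hdm : Measurable dens := by
    rw [hdens]
    exact ENNReal.measurable_ofReal.comp (Continuous.measurable (by continuity))
  have hvol : (volume : Measure ℂ) = (volume : Measure (ℝ × ℝ)).map e.symm :=
    (Complex.volume_preserving_equiv_real_prod.symm e).map_eq.symm
  rw [hvol, wd_map_equiv e.symm volume dens hdm]
  have hkey : (fun p : ℝ × ℝ => dens (e.symm p))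
      = fun p : ℝ × ℝ => gaussianPDF a.re (w/2) p.1 * gaussianPDF a.im (w/2) p.2 := by
    funext p
    have hre : (e.symm p - a).re = p.1 - a.re := by
      simp [he, Complex.measurableEquivRealProd, Complex.equivRealProd]
    have him : (e.symm p - a).im = p.2 - a.im := by
      simp [he, Complex.measurableEquivRealProd, Complex.equivRealProd]
    have habs : ‖e.symm p - a‖^2 = (p.1 - a.re)^2 + (p.2 - a.im)^2 := by
      rw [Complex.sq_norm, Complex.normSq_apply, hre, him]
      ring
    rw [hdens]
    simp only
    rw [habs, gaussianPDF, gaussianPDF, ← ENNReal.ofReal_mul (gaussianPDFReal_nonneg _ _ _)]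
    congr 1
    simp only [gaussianPDFReal]
    have hc : ((w/2 : ℝ≥0) : ℝ) = (w:ℝ)/2 := by push_cast; ring
    rw [hc]
    have h2 : 2 * ((w:ℝ)/2) = w := by ring
    have hsq : √(2 * π * ((w:ℝ)/2)) = √(π * w) := by rw [show 2*π*((w:ℝ)/2) = π*w by ring]
    rw [hsq]
    have hinv : (√(π * (w:ℝ)))⁻¹ * (√(π * w))⁻¹ = (π * w)⁻¹ := by
      rw [← mul_inv, Real.mul_self_sqrt (by positivity)]
    calc (π * (w:ℝ))⁻¹ * rexp (-((p.1 - a.re)^2 + (p.2 - a.im)^2) / w)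
        = ((√(π * (w:ℝ)))⁻¹ * (√(π * w))⁻¹) * rexp (-((p.1 - a.re)^2 + (p.2 - a.im)^2) / w) := by
          rw [hinv]
      _ = _ := by
          rw [show -((p.1 - a.re)^2 + (p.2 - a.im)^2) / (w:ℝ)
              = -(p.1 - a.re)^2 / (2 * ((w:ℝ)/2)) + -(p.2 - a.im)^2 / (2 * ((w:ℝ)/2)) by
            field_simp; ring, Real.exp_add]
          ring
  rw [hkey]
  haveI : SigmaFinite ((volume : Measure ℝ).withDensity (gaussianPDF a.re (w/2))) := by
    rw [← gaussianReal_of_var_ne_zero _ hw2]; infer_instance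
  haveI : SigmaFinite ((volume : Measure ℝ).withDensity (gaussianPDF a.im (w/2))) := by
    rw [← gaussianReal_of_var_ne_zero _ hw2]; infer_instance
  rw [Measure.volume_eq_prod, ← prod_wd _ _ _ _ (measurable_gaussianPDF _ _) (measurable_gaussianPDF _ _),
    ← gaussianReal_of_var_ne_zero _ hw2, ← gaussianReal_of_var_ne_zero _ hw2]
  rfl

lemma cgauss_map (a : ℂ) (w : ℝ≥0) (c1 c2 k : ℝ) :
    (cgauss a w).map (fun y : ℂ => c1 * y.re + c2 * y.im + k)
      = gaussianReal (c1 * a.re + c2 * a.im + k)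
          (⟨c1^2, sq_nonneg _⟩ * (w/2) + ⟨c2^2, sq_nonneg _⟩ * (w/2)) := by
  unfold cgauss
  rw [Measure.map_map (by fun_prop) (MeasurableEquiv.measurable _)]
  have hcomp : (fun y : ℂ => c1 * y.re + c2 * y.im + k) ∘ Complex.measurableEquivRealProd.symm
      = (fun u => u + k) ∘ (fun p : ℝ × ℝ => (fun x => c1 * x) p.1 + (fun x => c2 * x) p.2) := by
    funext p
    simp [Complex.measurableEquivRealProd, Complex.equivRealProd]
  rw [hcomp, ← Measure.map_map (by fun_prop) (by fun_prop)]
  rw [gauss_map_add' _ _ _ _ (by fun_prop) (by fun_prop) (c1 * a.re) (c2 * a.im)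
    (⟨c1^2, sq_nonneg _⟩ * (w/2)) (⟨c2^2, sq_nonneg _⟩ * (w/2))
    (gaussianReal_map_const_mul c1) (gaussianReal_map_const_mul c2),
    gaussianReal_map_add_const]

-- factorization of the complex N-dim gaussian density measure

lemma slot_fact (N : ℕ) (v : ℝ) (hv : 0 < v) (m : Fin N → ℂ) :
    volume.withDensity (fun y : Fin N → ℂ =>
        ENNReal.ofReal ((π * v) ^ (-(N:ℤ)) * rexp (-(∑ j, ‖y j - m j‖ ^ 2) / v)))
      = Measure.pi (fun j => cgauss (m j) ⟨v, hv.le⟩) := by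
  have hπv : (0:ℝ) < π * v := by positivity
  have hwne : (⟨v, hv.le⟩ : ℝ≥0) ≠ 0 := fun h => hv.ne' (congrArg NNReal.toReal h)
  have hdens : ∀ j : Fin N, volume.withDensity
      (fun z : ℂ => ENNReal.ofReal ((π * v)⁻¹ * rexp (-‖z - m j‖^2 / v)))
      = cgauss (m j) ⟨v, hv.le⟩ := by
    intro j
    have h := cgauss_density (m j) ⟨v, hv.le⟩ hwne
    exact h
  have hprod : (fun y : Fin N → ℂ =>
      ENNReal.ofReal ((π * v) ^ (-(N:ℤ)) * rexp (-(∑ j, ‖y j - m j‖ ^ 2) / v)))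
      = fun y : Fin N → ℂ =>
        ∏ j, ENNReal.ofReal ((π * v)⁻¹ * rexp (-‖y j - m j‖^2 / v)) := by
    funext y
    rw [← ENNReal.ofReal_prod_of_nonneg (fun j _ => by positivity)]
    congr 1
    rw [Finset.prod_mul_distrib, Finset.prod_const, Finset.card_univ, Fintype.card_fin]
    have h1 : (π * v) ^ (-(N:ℤ)) = ((π * v)⁻¹) ^ N := by
      rw [zpow_neg, zpow_natCast, inv_pow]
    have h2 : rexp (-(∑ j, ‖y j - m j‖ ^ 2) / v)
        = ∏ j, rexp (-‖y j - m j‖^2 / v) := by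
      rw [← Real.exp_sum]
      congr 1
      have hnorm : (∑ j, ‖y j - m j‖ ^ 2) = ∑ j, ‖y j - m j‖^2 :=
        Finset.sum_congr rfl fun j _ => by rfl
      have hs : (∑ j, -‖y j - m j‖^2 / v)
          = -(∑ j, ‖y j - m j‖^2) / v := by
        rw [← Finset.sum_div, Finset.sum_neg_distrib]
      rw [hnorm, hs]
    rw [h1, h2]
  rw [hprod]
  have hvolpi : (volume : Measure (Fin N → ℂ)) = Measure.pi fun _ => volume := volume_pi
  rw [hvolpi]
  have hmeas : ∀ j : Fin N, Measurable
      (fun z : ℂ => ENNReal.ofReal ((π * v)⁻¹ * rexp (-‖z - m j‖^2 / v))) :=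
    fun j => ENNReal.measurable_ofReal.comp (Continuous.measurable (by continuity))
  rw [← pi_wd N (fun _ => volume) (fun _ => inferInstance)
    (fun j z => ENNReal.ofReal ((π * v)⁻¹ * rexp (-‖z - m j‖^2 / v)))
    hmeas (fun j => by rw [hdens j]; exact cgauss_prob _ _)]
  exact congrArg Measure.pi (funext fun j => hdens j)

lemma meas_g (N : ℕ) (c1 c2 k : Fin N → ℝ) :
    Measurable (fun y : Fin N → ℂ => ∑ j, (c1 j * (y j).re + c2 j * (y j).im + k j)) := by
  refine Finset.measurable_sum Finset.univ fun j _ => ?_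
  exact (((Complex.measurable_re.comp (measurable_pi_apply j)).const_mul (c1 j)).add
    ((Complex.measurable_im.comp (measurable_pi_apply j)).const_mul (c2 j))).add measurable_const

-- core pushforward of the statistic

lemma main_core (T N : ℕ) (W : Fin T → ℝ≥0)
    (c1 c2 k : Fin T → Fin N → ℝ) (a : Fin T → Fin N → ℂ) :
    (Measure.pi fun t => Measure.pi fun j => cgauss (a t j) (W t)).map
        (fun Y : Fin T → Fin N → ℂ => ∑ t, ∑ j,
          (c1 t j * (Y t j).re + c2 t j * (Y t j).im + k t j))
      = gaussianReal
          (∑ t, ∑ j, (c1 t j * (a t j).re + c2 t j * (a t j).im + k t j))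
          (∑ t, ∑ j, (⟨(c1 t j)^2, sq_nonneg _⟩ * (W t/2)
            + ⟨(c2 t j)^2, sq_nonneg _⟩ * (W t/2))) := by
  have hslot : ∀ t : Fin T,
      (Measure.pi fun j => cgauss (a t j) (W t)).map
          (fun y : Fin N → ℂ => ∑ j, (c1 t j * (y j).re + c2 t j * (y j).im + k t j))
        = gaussianReal (∑ j, (c1 t j * (a t j).re + c2 t j * (a t j).im + k t j))
            (∑ j, (⟨(c1 t j)^2, sq_nonneg _⟩ * (W t/2)
              + ⟨(c2 t j)^2, sq_nonneg _⟩ * (W t/2))) := by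
    intro t
    exact gauss_map_sum N _ (fun j => inferInstance)
      (fun j (z : ℂ) => c1 t j * z.re + c2 t j * z.im + k t j)
      (fun j => ((Complex.measurable_re.const_mul _).add
        (Complex.measurable_im.const_mul _)).add measurable_const)
      _ _ (fun j => cgauss_map (a t j) _ (c1 t j) (c2 t j) (k t j))
  exact gauss_map_sum T _ (fun t => inferInstance)
    (fun t (y : Fin N → ℂ) => ∑ j, (c1 t j * (y j).re + c2 t j * (y j).im + k t j))
    (fun t => meas_g N (c1 t) (c2 t) (k t)) _ _ hslot

lemma cnormsq (z : ℂ) : ‖z‖^2 = z.re^2 + z.im^2 := by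
  rw [Complex.sq_norm, Complex.normSq_apply]; ring

lemma compute_prob (T N : ℕ) (v : Fin T → ℝ) (hv : ∀ t, 0 < v t)
    (m₀ m₁ a : Fin T → Fin N → ℂ) (lam : ℝ) (hlam : 0 < lam)
    (f : (Fin N → ℂ) → ℝ → (Fin N → ℂ) → ℝ)
    (hf : ∀ (m : Fin N → ℂ) (w : ℝ) (y : Fin N → ℂ),
      f m w y = (Real.pi * w) ^ (-(N : ℤ)) * Real.exp (-(∑ j, ‖y j - m j‖ ^ 2) / w))
    (hDpos : 0 < ∑ t, (∑ j, ‖m₁ t j - m₀ t j‖ ^ 2) / v t)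
    (M : ℝ)
    (hM : M = ∑ t, ∑ j,
      ((2*((m₁ t j).re - (m₀ t j).re)/(v t)) * (a t j).re
        + (2*((m₁ t j).im - (m₀ t j).im)/(v t)) * (a t j).im
        + ((m₀ t j).re^2 + (m₀ t j).im^2 - (m₁ t j).re^2 - (m₁ t j).im^2)/(v t))) :
    (Measure.pi fun t => Measure.pi fun j => cgauss (a t j) ⟨v t, (hv t).le⟩)
        {Y : Fin T → Fin N → ℂ |
          (∏ t, f (m₁ t) (v t) (Y t)) / (∏ t, f (m₀ t) (v t) (Y t)) > lam}
      = ENNReal.ofReal (∫ s in Set.Ioi ((Real.log lam - M) /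
            Real.sqrt (2 * (∑ t, (∑ j, ‖m₁ t j - m₀ t j‖ ^ 2) / v t))),
          Real.exp (-s^2/2) / Real.sqrt (2*π)) := by
  set c1 : Fin T → Fin N → ℝ := fun t j => 2*((m₁ t j).re - (m₀ t j).re)/(v t) with hc1
  set c2 : Fin T → Fin N → ℝ := fun t j => 2*((m₁ t j).im - (m₀ t j).im)/(v t) with hc2
  set kk : Fin T → Fin N → ℝ := fun t j =>
    ((m₀ t j).re^2 + (m₀ t j).im^2 - (m₁ t j).re^2 - (m₁ t j).im^2)/(v t) with hkk
  set W : Fin T → ℝ≥0 := fun t => (⟨v t, (hv t).le⟩ : ℝ≥0) with hW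
  set Wtot : ℝ≥0 := ∑ t, ∑ j, (⟨(c1 t j)^2, sq_nonneg _⟩ * (W t/2)
    + ⟨(c2 t j)^2, sq_nonneg _⟩ * (W t/2)) with hWtot
  have hWcoe : (Wtot : ℝ) = 2 * (∑ t, (∑ j, ‖m₁ t j - m₀ t j‖ ^ 2) / v t) := by
    rw [hWtot]
    push_cast
    rw [Finset.mul_sum]
    refine Finset.sum_congr rfl fun t _ => ?_
    rw [Finset.sum_div, Finset.mul_sum]
    refine Finset.sum_congr rfl fun j _ => ?_
    have hvt := hv t
    erw [NNReal.coe_mul, NNReal.coe_mul, NNReal.coe_div]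
    simp only [hc1, hc2, hW, NNReal.coe_mk, NNReal.coe_ofNat, cnormsq, Complex.sub_re, Complex.sub_im]
    erw [NNReal.coe_mk, NNReal.coe_mk, NNReal.coe_mk]
    field_simp
  have hWne : Wtot ≠ 0 := by
    intro h
    rw [h] at hWcoe
    simp only [NNReal.coe_zero] at hWcoe
    linarith
  have hmeasL : Measurable (fun Y : Fin T → Fin N → ℂ => ∑ t, ∑ j,
      (c1 t j * (Y t j).re + c2 t j * (Y t j).im + kk t j)) :=
    Finset.measurable_sum Finset.univ fun t _ =>
      (meas_g N (c1 t) (c2 t) (kk t)).comp (measurable_pi_apply t)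
  have hset : {Y : Fin T → Fin N → ℂ |
        (∏ t, f (m₁ t) (v t) (Y t)) / (∏ t, f (m₀ t) (v t) (Y t)) > lam}
      = (fun Y : Fin T → Fin N → ℂ => ∑ t, ∑ j,
          (c1 t j * (Y t j).re + c2 t j * (Y t j).im + kk t j)) ⁻¹'
            Set.Ioi (Real.log lam) := by
    ext Y
    simp only [Set.mem_setOf_eq, Set.mem_preimage, Set.mem_Ioi, gt_iff_lt]
    have hPne : (∏ t, (π * v t) ^ (-(N:ℤ))) ≠ 0 := by
      refine Finset.prod_ne_zero_iff.2 fun t _ => ?_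
      have : (0:ℝ) < π * v t := by have := hv t; positivity
      exact zpow_ne_zero _ this.ne'
    have hratio : (∏ t, f (m₁ t) (v t) (Y t)) / (∏ t, f (m₀ t) (v t) (Y t))
        = rexp (∑ t, ∑ j, (c1 t j * (Y t j).re + c2 t j * (Y t j).im + kk t j)) := by
      simp_rw [hf]
      rw [Finset.prod_mul_distrib, Finset.prod_mul_distrib, ← Real.exp_sum, ← Real.exp_sum,
        mul_div_mul_left _ _ hPne, ← Real.exp_sub]
      congr 1
      rw [← Finset.sum_sub_distrib]
      refine Finset.sum_congr rfl fun t _ => ?_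
      have hnum : (-∑ j, ‖Y t j - m₁ t j‖ ^ 2) - (-∑ j, ‖Y t j - m₀ t j‖ ^ 2)
          = ∑ j, (‖Y t j - m₀ t j‖^2 - ‖Y t j - m₁ t j‖^2) := by
        rw [Finset.sum_sub_distrib]
        ring
      rw [div_sub_div_same, hnum, Finset.sum_div]
      refine Finset.sum_congr rfl fun j _ => ?_
      have hvt := hv t
      simp only [hc1, hc2, hkk, cnormsq, Complex.sub_re, Complex.sub_im]
      field_simp
      ring
    rw [hratio]
    exact (Real.log_lt_iff_lt_exp hlam).symm
  rw [hset, ← Measure.map_apply hmeasL measurableSet_Ioi,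
    main_core T N W c1 c2 kk a, ← hM, gauss_tail M Wtot hWne (Real.log lam), hWcoe]

/-- Tracking LVS (Theorem 4): error rates of the likelihood ratio test over `T`
independent time slots of equal-covariance complex Gaussian observations. -/
theorem stmt_14 (T N : ℕ) (hT : 1 ≤ T) (hN : 1 ≤ N)
    (v : Fin T → ℝ) (hv : ∀ t, 0 < v t)
    (m₀ m₁ : Fin T → Fin N → ℂ) (hne : ∃ t, m₁ t ≠ m₀ t)
    (D : ℝ) (hD : D = ∑ t, (∑ j, ‖m₁ t j - m₀ t j‖ ^ 2) / v t)
    (f : (Fin N → ℂ) → ℝ → (Fin N → ℂ) → ℝ)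
    (hf : ∀ (m : Fin N → ℂ) (w : ℝ) (y : Fin N → ℂ),
      f m w y = (Real.pi * w) ^ (-(N : ℤ)) * Real.exp (-(∑ j, ‖y j - m j‖ ^ 2) / w))
    (μ : Fin T → Fin 2 → Measure (Fin N → ℂ))
    (hμ₀ : ∀ t, μ t 0 = volume.withDensity (fun y => ENNReal.ofReal (f (m₀ t) (v t) y)))
    (hμ₁ : ∀ t, μ t 1 = volume.withDensity (fun y => ENNReal.ofReal (f (m₁ t) (v t) y)))
    (Q : ℝ → ℝ)
    (hQ : ∀ x, Q x = ∫ s in Set.Ioi x, Real.exp (-s ^ 2 / 2) / Real.sqrt (2 * Real.pi)) :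
    ∀ lam : ℝ, 0 < lam →
      Measure.pi (fun t => μ t 0)
          {Y : Fin T → Fin N → ℂ |
            (∏ t, f (m₁ t) (v t) (Y t)) / (∏ t, f (m₀ t) (v t) (Y t)) > lam}
        = ENNReal.ofReal (Q ((Real.log lam + D) / Real.sqrt (2 * D))) ∧
      Measure.pi (fun t => μ t 1)
          {Y : Fin T → Fin N → ℂ |
            (∏ t, f (m₁ t) (v t) (Y t)) / (∏ t, f (m₀ t) (v t) (Y t)) > lam}
        = ENNReal.ofReal (Q ((Real.log lam - D) / Real.sqrt (2 * D))) := by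
  subst hD
  intro lam hlam
  have hDpos : 0 < ∑ t, (∑ j, ‖m₁ t j - m₀ t j‖ ^ 2) / v t := by
    obtain ⟨t0, ht0⟩ := hne
    obtain ⟨j0, hj0⟩ := Function.ne_iff.1 ht0
    refine Finset.sum_pos' (fun t _ => ?_) ⟨t0, Finset.mem_univ _, ?_⟩
    · refine div_nonneg (Finset.sum_nonneg fun j _ => by positivity) (hv t).le
    · refine div_pos (Finset.sum_pos' (fun j _ => by positivity)
        ⟨j0, Finset.mem_univ _, ?_⟩) (hv t0)
      have : m₁ t0 j0 - m₀ t0 j0 ≠ 0 := sub_ne_zero.2 hj0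
      have hn : 0 < ‖m₁ t0 j0 - m₀ t0 j0‖ := norm_pos_iff.2 this
      positivity
  have hfact : ∀ (m : Fin T → Fin N → ℂ), (∀ t, μ t (if m = m₀ then 0 else 1) = μ t 0) → True := fun _ _ => trivial
  have hfact0 : (Measure.pi fun t => μ t 0)
      = Measure.pi (fun t => Measure.pi fun j => cgauss (m₀ t j) ⟨v t, (hv t).le⟩) := by
    refine congrArg Measure.pi (funext fun t => ?_)
    rw [hμ₀ t]
    have hrw : (fun y : Fin N → ℂ => ENNReal.ofReal (f (m₀ t) (v t) y))
        = fun y : Fin N → ℂ => ENNReal.ofReal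
            ((π * v t) ^ (-(N:ℤ)) * rexp (-(∑ j, ‖y j - m₀ t j‖ ^ 2) / v t)) :=
      funext fun y => by rw [hf]
    rw [hrw]
    exact slot_fact N (v t) (hv t) (m₀ t)
  have hfact1 : (Measure.pi fun t => μ t 1)
      = Measure.pi (fun t => Measure.pi fun j => cgauss (m₁ t j) ⟨v t, (hv t).le⟩) := by
    refine congrArg Measure.pi (funext fun t => ?_)
    rw [hμ₁ t]
    have hrw : (fun y : Fin N → ℂ => ENNReal.ofReal (f (m₁ t) (v t) y))
        = fun y : Fin N → ℂ => ENNReal.ofReal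
            ((π * v t) ^ (-(N:ℤ)) * rexp (-(∑ j, ‖y j - m₁ t j‖ ^ 2) / v t)) :=
      funext fun y => by rw [hf]
    rw [hrw]
    exact slot_fact N (v t) (hv t) (m₁ t)
  have hM0 : (-(∑ t, (∑ j, ‖m₁ t j - m₀ t j‖ ^ 2) / v t)) = ∑ t, ∑ j,
      ((2*((m₁ t j).re - (m₀ t j).re)/(v t)) * (m₀ t j).re
        + (2*((m₁ t j).im - (m₀ t j).im)/(v t)) * (m₀ t j).im
        + ((m₀ t j).re^2 + (m₀ t j).im^2 - (m₁ t j).re^2 - (m₁ t j).im^2)/(v t)) := by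
    rw [← Finset.sum_neg_distrib]
    refine Finset.sum_congr rfl fun t _ => ?_
    rw [Finset.sum_div, ← Finset.sum_neg_distrib]
    refine Finset.sum_congr rfl fun j _ => ?_
    have hvt := hv t
    simp only [cnormsq, Complex.sub_re, Complex.sub_im]
    field_simp
    ring
  have hM1 : (∑ t, (∑ j, ‖m₁ t j - m₀ t j‖ ^ 2) / v t) = ∑ t, ∑ j,
      ((2*((m₁ t j).re - (m₀ t j).re)/(v t)) * (m₁ t j).re
        + (2*((m₁ t j).im - (m₀ t j).im)/(v t)) * (m₁ t j).im
        + ((m₀ t j).re^2 + (m₀ t j).im^2 - (m₁ t j).re^2 - (m₁ t j).im^2)/(v t)) := by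
    refine Finset.sum_congr rfl fun t _ => ?_
    rw [Finset.sum_div]
    refine Finset.sum_congr rfl fun j _ => ?_
    have hvt := hv t
    simp only [cnormsq, Complex.sub_re, Complex.sub_im]
    field_simp
    ring
  constructor
  · rw [hfact0, compute_prob T N v hv m₀ m₁ m₀ lam hlam f hf hDpos _ hM0, hQ, sub_neg_eq_add]
  · rw [hfact1, compute_prob T N v hv m₀ m₁ m₁ lam hlam f hf hDpos _ hM1, hQ]
end

section
/- Let Q(x) = ∫_x^∞ (2π)^{−1/2}·e^{−t²/2} dt be the standard normal tail function. Let 0 < D < D' and let λ, λ' > 0 satisfy (ln λ + D)/√(2D) = (ln λ' + D')/√(2D') (i.e., the two tests have equal false positive rate Q((ln λ + D)/√(2D)) = Q((ln λ' + D')/√(2D'))). Then Q((ln λ' − D')/√(2D')) > Q((ln λ − D)/√(2D)); that is, the detection rate at KL divergence D' strictly exceeds the detection rate at KL divergence D. -/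
open MeasureTheory

lemma gauss_integrable : Integrable (fun t : ℝ => Real.exp (-t ^ 2 / 2) / Real.sqrt (2 * Real.pi)) := by
  have h : Integrable (fun t : ℝ => Real.exp (-(1/2 : ℝ) * t ^ 2)) :=
    integrable_exp_neg_mul_sq (by norm_num)
  have := h.div_const (Real.sqrt (2 * Real.pi))
  refine this.congr ?_
  filter_upwards with t
  ring_nf

lemma Qtail_strict_anti {x y : ℝ} (hxy : x < y) :
    (∫ t in Set.Ioi y, Real.exp (-t ^ 2 / 2) / Real.sqrt (2 * Real.pi))
      < ∫ t in Set.Ioi x, Real.exp (-t ^ 2 / 2) / Real.sqrt (2 * Real.pi) := by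
  set f : ℝ → ℝ := fun t => Real.exp (-t ^ 2 / 2) / Real.sqrt (2 * Real.pi) with hf
  have hint : Integrable f := gauss_integrable
  have hsplit : (∫ t in Set.Ioi x, f t)
      = (∫ t in Set.Ioc x y, f t) + ∫ t in Set.Ioi y, f t := by
    rw [← MeasureTheory.setIntegral_union (Set.Ioc_disjoint_Ioi le_rfl) measurableSet_Ioi
      hint.integrableOn hint.integrableOn, Set.Ioc_union_Ioi_eq_Ioi hxy.le]
  have hpos : 0 < ∫ t in Set.Ioc x y, f t := by
    have := intervalIntegral.intervalIntegral_pos_of_pos (f := f) (a := x) (b := y)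
      (hint.intervalIntegrable : IntervalIntegrable f volume x y)
      (fun t => by
        have h1 : 0 < Real.exp (-t ^ 2 / 2) := Real.exp_pos _
        have h2 : 0 < Real.sqrt (2 * Real.pi) := Real.sqrt_pos.2 (by positivity)
        exact div_pos h1 h2) hxy
    rwa [intervalIntegral.integral_of_le hxy.le] at this
  linarith

/-- At any fixed false positive rate, the detection rate of the LVS is strictly
increasing in the Kullback–Leibler divergence `D`. -/
theorem stmt_16 (Q : ℝ → ℝ)
    (hQ : ∀ x, Q x = ∫ t in Set.Ioi x, Real.exp (-t ^ 2 / 2) / Real.sqrt (2 * Real.pi))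
    (D D' : ℝ) (hD : 0 < D) (hDD' : D < D')
    (lam lam' : ℝ) (hlam : 0 < lam) (hlam' : 0 < lam')
    (heq : (Real.log lam + D) / Real.sqrt (2 * D)
        = (Real.log lam' + D') / Real.sqrt (2 * D')) :
    Q ((Real.log lam' - D') / Real.sqrt (2 * D'))
      > Q ((Real.log lam - D) / Real.sqrt (2 * D)) := by
  have hs : (0:ℝ) < Real.sqrt (2 * D) := Real.sqrt_pos.2 (by linarith)
  have hs' : (0:ℝ) < Real.sqrt (2 * D') := Real.sqrt_pos.2 (by linarith)
  have hss : Real.sqrt (2 * D) * Real.sqrt (2 * D) = 2 * D :=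
    Real.mul_self_sqrt (by linarith)
  have hss' : Real.sqrt (2 * D') * Real.sqrt (2 * D') = 2 * D' :=
    Real.mul_self_sqrt (by linarith)
  have h1 : (Real.log lam - D) / Real.sqrt (2 * D)
      = (Real.log lam + D) / Real.sqrt (2 * D) - Real.sqrt (2 * D) := by
    have e : (Real.log lam + D) / Real.sqrt (2 * D) - Real.sqrt (2 * D)
        = (Real.log lam + D - 2 * D) / Real.sqrt (2 * D) := by
      rw [eq_div_iff hs.ne', sub_mul, div_mul_cancel₀ _ hs.ne', hss]
    rw [e]; ring_nf
  have h2 : (Real.log lam' - D') / Real.sqrt (2 * D')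
      = (Real.log lam' + D') / Real.sqrt (2 * D') - Real.sqrt (2 * D') := by
    have e : (Real.log lam' + D') / Real.sqrt (2 * D') - Real.sqrt (2 * D')
        = (Real.log lam' + D' - 2 * D') / Real.sqrt (2 * D') := by
      rw [eq_div_iff hs'.ne', sub_mul, div_mul_cancel₀ _ hs'.ne', hss']
    rw [e]; ring_nf
  have hlt : (Real.log lam' - D') / Real.sqrt (2 * D')
      < (Real.log lam - D) / Real.sqrt (2 * D) := by
    rw [h1, h2, ← heq]
    have : Real.sqrt (2 * D) < Real.sqrt (2 * D') :=
      Real.sqrt_lt_sqrt (by linarith) (by linarith)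
    linarith
  rw [hQ, hQ]
  exact Qtail_strict_anti hlt
end
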